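/- Let α be a minimal-time FSSP solution, β an FSSP-candidate CA, and h a local simulation from α to β (i.e. a local mapping whose associated family Φ_h is deterministic and equals the family of β). If β is a minimal-time FSSP solution, then h is FSSP-compliant: h_z maps ⋆_α, G_α, Q_α to ⋆_β, G_β, Q_β respectively; h_s(l₋₁,l₀,l₁) = ⋆_β iff l₀ = ⋆_α; h_s(l₋₁,l₀,l₁) = F_β iff δ_α(l₋₁,l₀,l₁) = F_α; and h_s(Q_α,Q_α,Q_α) = h_s(Q_α,Q_α,⋆_α) = Q_β. -/

import Mathlib

namespace FSSP

open Classical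

/-- A (pre-)cellular automaton: a set of initial configurations and a
partial local transition function (partiality via `Option`). -/
structure PreCA (σ : Type) where
  init : Set (ℤ → σ)
  delta : σ → σ → σ → Option σ

variable {σ τ υ : Type}

/-- The (partial) space-time diagram of a configuration. -/
def PreCA.diagO (A : PreCA σ) (c : ℤ → σ) : ℕ → ℤ → Option σ
  | 0, p => some (c p)
  | t+1, p =>
    (A.diagO c t (p-1)).bind fun a =>
    (A.diagO c t p).bind fun b =>
    (A.diagO c t (p+1)).bind fun d =>
    A.delta a b d

/-- The CA condition: all space-time diagrams of initial configurations are
totally defined. -/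
def PreCA.Total (A : PreCA σ) : Prop :=
  ∀ c ∈ A.init, ∀ (t : ℕ) (p : ℤ), (A.diagO c t p).isSome

/-- The family of space-time diagrams associated to a CA. -/
def PreCA.family (A : PreCA σ) : Set (ℕ → ℤ → σ) :=
  { d | ∃ c ∈ A.init, ∀ (t : ℕ) (p : ℤ), A.diagO c t p = some (d t p) }

/-- The local configuration (a,b,c) occurs somewhere in the diagrams of `A`. -/
def PreCA.Occurs (A : PreCA σ) (a b c : σ) : Prop :=
  ∃ c0 ∈ A.init, ∃ (t : ℕ) (p : ℤ),
    A.diagO c0 t (p-1) = some a ∧ A.diagO c0 t p = some b ∧ A.diagO c0 t (p+1) = some c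

/-- The set of states occurring in the space-time diagrams of `A`. -/
def OccStates (A : PreCA σ) : Set σ :=
  { s | ∃ c ∈ A.init, ∃ (t : ℕ) (p : ℤ), A.diagO c t p = some s }

/-- The local transition relation of a family of space-time diagrams. -/
def ltr (D : Set (ℕ → ℤ → σ)) (l : σ × σ × σ) (s : σ) : Prop :=
  ∃ d ∈ D, ∃ (t : ℕ) (p : ℤ),
    d t (p-1) = l.1 ∧ d t p = l.2.1 ∧ d t (p+1) = l.2.2 ∧ d (t+1) p = s

/-- A family of diagrams is deterministic when its local transition relation
is functional. -/
def Deterministic (D : Set (ℕ → ℤ → σ)) : Prop :=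
  ∀ l s s', ltr D l s → ltr D l s' → s = s'

/-- The cellular automaton `Γ_D` associated to a family of diagrams `D`. -/
noncomputable def gamma (D : Set (ℕ → ℤ → σ)) : PreCA σ where
  init := { c | ∃ d ∈ D, c = fun p => d 0 p }
  delta := fun a b c =>
    if h : ∃ s, ltr D (a, b, c) s then some h.choose else none

/-- A local mapping from a CA with states `σ` to a set `τ`. -/
structure LocalMapping (σ τ : Type) where
  z : σ → τ
  s : σ × σ × σ → τ

/-- The transformed space-time diagram `h(d)`. -/
def LocalMapping.map (h : LocalMapping σ τ) (d : ℕ → ℤ → σ) : ℕ → ℤ → τ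
  | 0, p => h.z (d 0 p)
  | t+1, p => h.s (d t (p-1), d t p, d t (p+1))

/-- The family `Φ_h` of diagrams associated to a local mapping `h` from `A`. -/
def Phi (A : PreCA σ) (h : LocalMapping σ τ) : Set (ℕ → ℤ → τ) :=
  { e | ∃ d ∈ A.family, e = h.map d }

/-- Equational characterization: `h` is a local simulation from `A` to `B`. -/
def IsLocalSimulation (A : PreCA σ) (B : PreCA τ) (h : LocalMapping σ τ) : Prop :=
  B.init = { c' | ∃ c ∈ A.init, c' = fun p => h.z (c p) } ∧
  ∀ c ∈ A.init, ∀ (t : ℕ) (p : ℤ) (a b d : σ),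
    A.diagO c t (p-1) = some a → A.diagO c t p = some b → A.diagO c t (p+1) = some d →
    B.diagO (fun q => h.z (c q)) (t+1) p = some (h.s (a, b, d))

/-- The renaming of a CA along a bijection of states. -/
def rename (B : PreCA τ) (r : τ ≃ υ) : PreCA υ where
  init := { c' | ∃ c ∈ B.init, c' = fun p => r (c p) }
  delta := fun a b c => (B.delta (r.symm a) (r.symm b) (r.symm c)).map r

/-- The time-0 part of the super local transition table. -/
def SLTz (A : PreCA σ) : Set (σ × σ × σ) :=
  { l | ∃ d ∈ A.family, ∃ p : ℤ, d 0 (p-1) = l.1 ∧ d 0 p = l.2.1 ∧ d 0 (p+1) = l.2.2 }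

/-- The main part of the super local transition table: a quintuple at time t
together with the triple below it at time t+1. -/
def SLTs (A : PreCA σ) : Set ((σ × σ × σ × σ × σ) × (σ × σ × σ)) :=
  { q | ∃ d ∈ A.family, ∃ (t : ℕ) (p : ℤ),
      d t (p-2) = q.1.1 ∧ d t (p-1) = q.1.2.1 ∧ d t p = q.1.2.2.1 ∧
      d t (p+1) = q.1.2.2.2.1 ∧ d t (p+2) = q.1.2.2.2.2 ∧
      d (t+1) (p-1) = q.2.1 ∧ d (t+1) p = q.2.2.1 ∧ d (t+1) (p+1) = q.2.2.2 }

/-- The four special FSSP states. -/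
structure FSSPStates (σ : Type) where
  star : σ
  G : σ
  Q : σ
  F : σ

/-- The FSSP initial configuration of size `n`. -/
def initConfig (st : FSSPStates σ) (n : ℕ) : ℤ → σ := fun p =>
  if p ≤ 0 then st.star
  else if p = 1 then st.G
  else if p ≤ (n : ℤ) then st.Q
  else st.star

/-- `A` is an FSSP-candidate CA with special states `st`. -/
def IsCandidate (A : PreCA σ) (st : FSSPStates σ) : Prop :=
  A.init = { c | ∃ n : ℕ, 2 ≤ n ∧ c = initConfig st n } ∧
  (∀ a b c s, A.delta a b c = some s → (s = st.star ↔ b = st.star)) ∧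
  A.delta st.Q st.Q st.Q = some st.Q ∧
  A.delta st.Q st.Q st.star = some st.Q

/-- `A` is a minimal-time FSSP solution. -/
def IsSolution (A : PreCA σ) (st : FSSPStates σ) : Prop :=
  IsCandidate A st ∧ A.Total ∧
  ∀ n : ℕ, 2 ≤ n → ∀ (t : ℕ) (p : ℤ),
    (A.diagO (initConfig st n) t p = some st.F ↔ (2*n - 2 ≤ t ∧ 1 ≤ p ∧ p ≤ (n : ℤ)))

/-- FSSP-compliance of a local mapping `h` from `A` (with states `sa`) to the
states of an FSSP-candidate with special states `sb`. -/
def FSSPCompliant (A : PreCA σ) (sa : FSSPStates σ) (sb : FSSPStates τ)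
    (h : LocalMapping σ τ) : Prop :=
  h.z sa.star = sb.star ∧ h.z sa.G = sb.G ∧ h.z sa.Q = sb.Q ∧
  (∀ a b c, (A.delta a b c).isSome → (h.s (a, b, c) = sb.star ↔ b = sa.star)) ∧
  (∀ a b c, (A.delta a b c).isSome → (h.s (a, b, c) = sb.F ↔ A.delta a b c = some sa.F)) ∧
  h.s (sa.Q, sa.Q, sa.Q) = sb.Q ∧ h.s (sa.Q, sa.Q, sa.star) = sb.Q


/-! ### Auxiliary lemmas -/

lemma diagO_zero (A : PreCA σ) (c : ℤ → σ) (p : ℤ) : A.diagO c 0 p = some (c p) := rfl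

lemma diagO_one (A : PreCA σ) (c : ℤ → σ) (p : ℤ) :
    A.diagO c 1 p = A.delta (c (p-1)) (c p) (c (p+1)) := rfl

lemma diagO_succ_some {A : PreCA σ} {c : ℤ → σ} {t : ℕ} {p : ℤ} {s : σ}
    (h : A.diagO c (t+1) p = some s) :
    ∃ a b d, A.diagO c t (p-1) = some a ∧ A.diagO c t p = some b ∧
      A.diagO c t (p+1) = some d ∧ A.delta a b d = some s := by
  simp only [PreCA.diagO, Option.bind_eq_some_iff] at h
  obtain ⟨a, ha, b, hb, d, hd, hs⟩ := h
  exact ⟨a, b, d, ha, hb, hd, hs⟩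

lemma star_column {A : PreCA σ} {st : FSSPStates σ}
    (hc : ∀ a b c s, A.delta a b c = some s → (s = st.star ↔ b = st.star))
    (c : ℤ → σ) : ∀ (t : ℕ) (p : ℤ) (s : σ), A.diagO c t p = some s →
      (s = st.star ↔ c p = st.star) := by
  intro t
  induction t with
  | zero =>
    intro p s hsome
    rw [diagO_zero] at hsome
    rw [Option.some_inj] at hsome
    rw [hsome]
  | succ t ih =>
    intro p s hsome
    obtain ⟨a, b, d, ha, hb, hd, hs⟩ := diagO_succ_some hsome
    rw [hc a b d s hs]
    exact ih p b hb

lemma initConfig_star_low {st : FSSPStates σ} {n : ℕ} {p : ℤ} (hp : p ≤ 0) :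
    initConfig st n p = st.star := by
  unfold initConfig; rw [if_pos hp]

lemma initConfig_G {st : FSSPStates σ} {n : ℕ} : initConfig st n 1 = st.G := by
  unfold initConfig; norm_num

lemma initConfig_Q {st : FSSPStates σ} {n : ℕ} {p : ℤ} (h1 : 2 ≤ p) (h2 : p ≤ (n : ℤ)) :
    initConfig st n p = st.Q := by
  unfold initConfig; rw [if_neg (by omega), if_neg (by omega), if_pos h2]

lemma initConfig_star_big {st : FSSPStates σ} {n : ℕ} {p : ℤ} (h1 : (n : ℤ) < p)
    (h2 : 1 ≤ n) : initConfig st n p = st.star := by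
  unfold initConfig; rw [if_neg (by omega), if_neg (by omega), if_neg (by omega)]

lemma initConfig_eq_star_iff {st : FSSPStates σ} (hG : st.G ≠ st.star)
    (hQ : st.Q ≠ st.star) {n : ℕ} (hn : 2 ≤ n) (p : ℤ) :
    initConfig st n p = st.star ↔ (p ≤ 0 ∨ (n : ℤ) < p) := by
  unfold initConfig
  split_ifs with h1 h2 h3
  · simp [h1]
  · constructor
    · intro hg; exact absurd hg hG
    · intro hc; exfalso; omega
  · constructor
    · intro hq; exact absurd hq hQ
    · intro hc; exfalso; omega
  · constructor
    · intro _; right; omega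
    · intro _; rfl

lemma init_mem {A : PreCA σ} {st : FSSPStates σ} (hA : IsSolution A st)
    {n : ℕ} (hn : 2 ≤ n) : initConfig st n ∈ A.init := by
  rw [hA.1.1]; exact ⟨n, hn, rfl⟩

lemma diag_some {A : PreCA σ} {st : FSSPStates σ} (hA : IsSolution A st)
    {n : ℕ} (hn : 2 ≤ n) (t : ℕ) (p : ℤ) :
    ∃ s, A.diagO (initConfig st n) t p = some s := by
  have := hA.2.1 _ (init_mem hA hn) t p
  exact Option.isSome_iff_exists.mp this

lemma star_ne_F {A : PreCA σ} {st : FSSPStates σ} (hA : IsSolution A st) :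
    st.star ≠ st.F := by
  obtain ⟨s, hs⟩ := diag_some hA le_rfl 2 0
  have h1 : s = st.star := by
    rw [star_column hA.1.2.1 _ 2 0 s hs]
    exact initConfig_star_low le_rfl
  have h2 : ¬ (A.diagO (initConfig st 2) 2 0 = some st.F) := by
    rw [hA.2.2 2 le_rfl 2 0]
    rintro ⟨_, hp, _⟩; omega
  intro heq
  exact h2 (by rw [hs, h1, heq])

lemma F_at {A : PreCA σ} {st : FSSPStates σ} (hA : IsSolution A st) (p : ℤ)
    (h1 : 1 ≤ p) (h2 : p ≤ 2) : A.diagO (initConfig st 2) 2 p = some st.F :=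
  (hA.2.2 2 le_rfl 2 p).mpr ⟨by norm_num, h1, h2⟩

lemma Q_ne_star {A : PreCA σ} {st : FSSPStates σ} (hA : IsSolution A st) :
    st.Q ≠ st.star := by
  intro hQs
  have hF := F_at hA 2 (by norm_num) le_rfl
  have hstar : st.F = st.star := by
    rw [star_column hA.1.2.1 _ 2 2 st.F hF, initConfig_Q le_rfl (by norm_num)]
    exact hQs
  exact star_ne_F hA hstar.symm

lemma G_ne_star {A : PreCA σ} {st : FSSPStates σ} (hA : IsSolution A st) :
    st.G ≠ st.star := by
  intro hGs
  have hF := F_at hA 1 le_rfl (by norm_num)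
  have hstar : st.F = st.star := by
    rw [star_column hA.1.2.1 _ 2 1 st.F hF, initConfig_G]
    exact hGs
  exact star_ne_F hA hstar.symm

lemma init_image {A : PreCA σ} {B : PreCA τ} {sa : FSSPStates σ} {sb : FSSPStates τ}
    {h : LocalMapping σ τ} (hA : IsSolution A sa) (hB : IsSolution B sb)
    (hsim : IsLocalSimulation A B h) {n : ℕ} (hn : 2 ≤ n) :
    ∃ m : ℕ, 2 ≤ m ∧ (fun p => h.z (initConfig sa n p)) = initConfig sb m := by
  have hmem : (fun p => h.z (initConfig sa n p)) ∈ B.init := by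
    rw [hsim.1]; exact ⟨initConfig sa n, init_mem hA hn, rfl⟩
  rw [hB.1.1] at hmem
  exact hmem

lemma hz_star {A : PreCA σ} {B : PreCA τ} {sa : FSSPStates σ} {sb : FSSPStates τ}
    {h : LocalMapping σ τ} (hA : IsSolution A sa) (hB : IsSolution B sb)
    (hsim : IsLocalSimulation A B h) : h.z sa.star = sb.star := by
  obtain ⟨m, hm, heq⟩ := init_image hA hB hsim le_rfl
  have := congrFun heq 0
  simpa [initConfig_star_low (le_refl (0:ℤ))] using this

lemma hz_G {A : PreCA σ} {B : PreCA τ} {sa : FSSPStates σ} {sb : FSSPStates τ}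
    {h : LocalMapping σ τ} (hA : IsSolution A sa) (hB : IsSolution B sb)
    (hsim : IsLocalSimulation A B h) : h.z sa.G = sb.G := by
  obtain ⟨m, hm, heq⟩ := init_image hA hB hsim le_rfl
  have := congrFun heq 1
  simpa [initConfig_G] using this

lemma hz_Q {A : PreCA σ} {B : PreCA τ} {sa : FSSPStates σ} {sb : FSSPStates τ}
    {h : LocalMapping σ τ} (hA : IsSolution A sa) (hB : IsSolution B sb)
    (hsim : IsLocalSimulation A B h) : h.z sa.Q = sb.Q := by
  obtain ⟨m, hm, heq⟩ := init_image hA hB hsim le_rfl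
  have := congrFun heq 2
  rw [initConfig_Q le_rfl (by norm_num), initConfig_Q le_rfl (by exact_mod_cast hm)] at this
  exact this

lemma hz_initConfig {A : PreCA σ} {B : PreCA τ} {sa : FSSPStates σ} {sb : FSSPStates τ}
    {h : LocalMapping σ τ} (hA : IsSolution A sa) (hB : IsSolution B sb)
    (hsim : IsLocalSimulation A B h) {n : ℕ} (hn : 2 ≤ n) :
    (fun p => h.z (initConfig sa n p)) = initConfig sb n := by
  obtain ⟨m, hm, heq⟩ := init_image hA hB hsim hn
  have hQ : h.z sa.Q = sb.Q := hz_Q hA hB hsim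
  have hS : h.z sa.star = sb.star := hz_star hA hB hsim
  have hnm : n ≤ m := by
    by_contra hlt
    push_neg at hlt
    have := congrFun heq (n : ℤ)
    rw [initConfig_Q (by exact_mod_cast hn) le_rfl, hQ,
      initConfig_star_big (by exact_mod_cast hlt) (by omega)] at this
    exact Q_ne_star hB this
  have hmn : m ≤ n := by
    by_contra hlt
    push_neg at hlt
    have := congrFun heq ((n : ℤ) + 1)
    rw [initConfig_star_big (by omega) (by omega), hS,
      initConfig_Q (by omega) (by omega)] at this
    exact Q_ne_star hB this.symm
  have : m = n := le_antisymm hmn hnm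
  rw [heq, this]

/-- a local simulation between two minimal-time FSSP solutions
is FSSP-compliant (the domain of `δ_α` consisting of the occurring local
configurations). -/
theorem stmt9 {σ τ : Type} (A : PreCA σ) (B : PreCA τ)
    (sa : FSSPStates σ) (sb : FSSPStates τ)
    (hA : IsSolution A sa) (hB : IsSolution B sb)
    (hmin : ∀ a b c : σ, (A.delta a b c).isSome → A.Occurs a b c)
    (h : LocalMapping σ τ) (hsim : IsLocalSimulation A B h) :
    FSSPCompliant A sa sb h := by
  have hc4 : initConfig sa 4 ∈ A.init := init_mem hA (by norm_num)
  have himg4 : (fun p => h.z (initConfig sa 4 p)) = initConfig sb (4:ℕ) :=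
    hz_initConfig hA hB hsim (by norm_num)
  refine ⟨hz_star hA hB hsim, hz_G hA hB hsim, hz_Q hA hB hsim, ?_, ?_, ?_, ?_⟩
  · -- star condition
    intro a b d hsome
    obtain ⟨c0, hc0, t, p, ha, hb, hd⟩ := hmin a b d hsome
    have hc0' := hc0
    rw [hA.1.1] at hc0'
    obtain ⟨n, hn, rfl⟩ := hc0'
    have key := hsim.2 _ hc0 t p a b d ha hb hd
    rw [hz_initConfig hA hB hsim hn] at key
    have hBstar := star_column hB.1.2.1 (initConfig sb n) (t+1) p _ key
    have hAstar := star_column hA.1.2.1 (initConfig sa n) t p b hb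
    rw [hBstar, hAstar, initConfig_eq_star_iff (G_ne_star hB) (Q_ne_star hB) hn p,
      initConfig_eq_star_iff (G_ne_star hA) (Q_ne_star hA) hn p]
  · -- F condition
    intro a b d hsome
    obtain ⟨c0, hc0, t, p, ha, hb, hd⟩ := hmin a b d hsome
    have hc0' := hc0
    rw [hA.1.1] at hc0'
    obtain ⟨n, hn, rfl⟩ := hc0'
    have key := hsim.2 _ hc0 t p a b d ha hb hd
    rw [hz_initConfig hA hB hsim hn] at key
    have hdiagA : A.diagO (initConfig sa n) (t+1) p = A.delta a b d := by
      simp [PreCA.diagO, ha, hb, hd]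
    calc h.s (a, b, d) = sb.F ↔ some (h.s (a, b, d)) = some sb.F := Option.some_inj.symm
      _ ↔ B.diagO (initConfig sb n) (t+1) p = some sb.F := by rw [key]
      _ ↔ (2*n - 2 ≤ t+1 ∧ 1 ≤ p ∧ p ≤ (n:ℤ)) := hB.2.2 n hn (t+1) p
      _ ↔ A.diagO (initConfig sa n) (t+1) p = some sa.F := (hA.2.2 n hn (t+1) p).symm
      _ ↔ A.delta a b d = some sa.F := by rw [hdiagA]
  · -- h.s (Q,Q,Q) = Q
    have h1 : A.diagO (initConfig sa 4) 0 (3 - 1) = some sa.Q := by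
      rw [show (3:ℤ) - 1 = 2 by norm_num, diagO_zero, initConfig_Q le_rfl (by norm_num)]
    have h2 : A.diagO (initConfig sa 4) 0 3 = some sa.Q := by
      rw [diagO_zero, initConfig_Q (by norm_num) (by norm_num)]
    have h3 : A.diagO (initConfig sa 4) 0 (3 + 1) = some sa.Q := by
      rw [show (3:ℤ) + 1 = 4 by norm_num, diagO_zero, initConfig_Q (by norm_num) (by norm_num)]
    have key := hsim.2 _ hc4 0 3 sa.Q sa.Q sa.Q h1 h2 h3
    rw [himg4] at key
    have comp : B.diagO (initConfig sb 4) 1 3 = some sb.Q := by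
      rw [diagO_one, show (3:ℤ) - 1 = 2 by norm_num, show (3:ℤ) + 1 = 4 by norm_num,
        initConfig_Q le_rfl (by norm_num), initConfig_Q (by norm_num) (by norm_num),
        initConfig_Q (by norm_num) (by norm_num)]
      exact hB.1.2.2.1
    exact Option.some_inj.mp (key.symm.trans comp)
  · -- h.s (Q,Q,star) = Q
    have h1 : A.diagO (initConfig sa 4) 0 (4 - 1) = some sa.Q := by
      rw [show (4:ℤ) - 1 = 3 by norm_num, diagO_zero, initConfig_Q (by norm_num) (by norm_num)]
    have h2 : A.diagO (initConfig sa 4) 0 4 = some sa.Q := by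
      rw [diagO_zero, initConfig_Q (by norm_num) (by norm_num)]
    have h3 : A.diagO (initConfig sa 4) 0 (4 + 1) = some sa.star := by
      rw [show (4:ℤ) + 1 = 5 by norm_num, diagO_zero,
        initConfig_star_big (by norm_num) (by norm_num)]
    have key := hsim.2 _ hc4 0 4 sa.Q sa.Q sa.star h1 h2 h3
    rw [himg4] at key
    have comp : B.diagO (initConfig sb 4) 1 4 = some sb.Q := by
      rw [diagO_one, show (4:ℤ) - 1 = 3 by norm_num, show (4:ℤ) + 1 = 5 by norm_num,
        initConfig_Q (by norm_num) (by norm_num), initConfig_Q (by norm_num) (by norm_num),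
        initConfig_star_big (by norm_num) (by norm_num)]
      exact hB.1.2.2.2
    exact Option.some_inj.mp (key.symm.trans comp)

end FSSP
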